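/- arXiv:1605.00211 — 3 statements merged into one kernel-verified Lean document; each statement's English description precedes it below -/
import Mathlib

section
/- Let M ≥ 1 be the number of slots, let η ∈ (0,1], P_p > 0, P_int > 0, and for each slot i = 1,…,M let h_sp^i > 0 and θ_i > 0 be given constants. Suppose (ᾱ, Ē) with ᾱ ∈ [0,1]^M and Ē ∈ [0,∞)^M is feasible, i.e. it satisfies the energy-causality constraints ∑_{j=1}^i E_j ≤ ∑_{j=1}^i (1−α_j) η P_p for every i = 1,…,M and the interference constraints h_sp^i E_i ≤ α_i P_int for every i. If the total harvested energy is not exhausted, i.e. ∑_{j=1}^M E_j < ∑_{j=1}^M (1−α_j) η P_p, and moreover α_M > 0 and the interference constraint in slot M is slack, i.e. h_sp^M E_M < α_M P_int, then there exists a feasible pair (ᾱ, Ē′) with Ē′ ∈ [0,∞)^M whose objective value ∑_{i=1}^M α_i log₂(1 + θ_i E′_i / α_i) is strictly greater than ∑_{i=1}^M α_i log₂(1 + θ_i E_i / α_i). Consequently, any optimal policy (under these slackness conditions) must satisfy ∑_{i=1}^M E_i* = ∑_{i=1}^M (1 − α_i*) η P_p. -/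
/-- If a feasible offline policy `(α, E)` does not exhaust all the harvested energy by the
end of the `M` slots, and in the last slot the time-sharing parameter is positive and the
interference constraint is slack, then there is another feasible energy allocation `E'`
(with the same time sharing `α`) achieving a strictly larger sum rate.  Consequently an
optimal policy must use all the harvested energy. -/
theorem offline_policy_must_exhaust_energy
    (M : ℕ) (hM : 1 ≤ M)
    (η Pp Pint : ℝ) (hη : 0 < η) (hη1 : η ≤ 1) (hPp : 0 < Pp) (hPint : 0 < Pint)
    (hsp θ : Fin M → ℝ) (hhsp : ∀ i, 0 < hsp i) (hθ : ∀ i, 0 < θ i)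
    (α E : Fin M → ℝ)
    (hα0 : ∀ i, 0 ≤ α i) (hα1 : ∀ i, α i ≤ 1) (hE0 : ∀ i, 0 ≤ E i)
    (hcaus : ∀ i : Fin M,
      ∑ j ∈ Finset.Iic i, E j ≤ ∑ j ∈ Finset.Iic i, (1 - α j) * η * Pp)
    (hint : ∀ i : Fin M, hsp i * E i ≤ α i * Pint)
    (hslack : ∑ i, E i < ∑ i, (1 - α i) * η * Pp)
    (hαM : 0 < α ⟨M - 1, by omega⟩)
    (hintM : hsp ⟨M - 1, by omega⟩ * E ⟨M - 1, by omega⟩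
        < α ⟨M - 1, by omega⟩ * Pint) :
    ∃ E' : Fin M → ℝ,
      (∀ i, 0 ≤ E' i) ∧
      (∀ i : Fin M,
        ∑ j ∈ Finset.Iic i, E' j ≤ ∑ j ∈ Finset.Iic i, (1 - α j) * η * Pp) ∧
      (∀ i : Fin M, hsp i * E' i ≤ α i * Pint) ∧
      (∑ i, α i * Real.logb 2 (1 + θ i * E i / α i))
        < ∑ i, α i * Real.logb 2 (1 + θ i * E' i / α i) := by
  set m : Fin M := ⟨M - 1, by omega⟩ with hm
  have hmval : (m : ℕ) = M - 1 := rfl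
  have hmtop : ∀ j : Fin M, j ≤ m := by
    intro j
    have := j.isLt
    exact Fin.le_def.mpr (by omega)
  set S := ∑ i, (1 - α i) * η * Pp - ∑ i, E i with hS
  have hSpos : 0 < S := by simp only [hS]; linarith
  set δ := (α m * Pint - hsp m * E m) / hsp m with hδ
  have hδpos : 0 < δ := div_pos (by linarith) (hhsp m)
  set ε := min S δ with hε
  have hεpos : 0 < ε := lt_min hSpos hδpos
  set E' := Function.update E m (E m + ε) with hE'
  have hE'm : E' m = E m + ε := Function.update_self _ _ _
  have hE'ne : ∀ j, j ≠ m → E' j = E j := fun j hj => Function.update_of_ne hj _ _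
  have hsum : ∑ i, E' i = (∑ i, E i) + ε := by
    rw [hE', Finset.sum_update_of_mem (Finset.mem_univ m)]
    rw [← Finset.sum_erase_add _ E (Finset.mem_univ m), Finset.sdiff_singleton_eq_erase]
    ring
  refine ⟨E', ?_, ?_, ?_, ?_⟩
  · intro i
    by_cases h : i = m
    · rw [h, hE'm]; linarith [hE0 m]
    · rw [hE'ne i h]; exact hE0 i
  · intro i
    by_cases h : i = m
    · subst h
      have hIic : Finset.Iic m = Finset.univ := by
        ext j; simp [hmtop j]
      rw [hIic, hsum]
      have : ε ≤ S := min_le_left _ _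
      simp only [hS] at this
      linarith
    · have : ∀ j ∈ Finset.Iic i, E' j = E j := by
        intro j hj
        apply hE'ne
        intro hjm
        exact h (le_antisymm (hmtop i) (hjm ▸ Finset.mem_Iic.mp hj))
      rw [Finset.sum_congr rfl this]
      exact hcaus i
  · intro i
    by_cases h : i = m
    · subst h
      rw [hE'm]
      have hεδ : ε ≤ δ := min_le_right _ _
      have hne : hsp m ≠ 0 := (hhsp m).ne'
      have hd : hsp m * δ = α m * Pint - hsp m * E m := by
        rw [hδ, mul_div_cancel₀ _ hne]
      nlinarith [hhsp m]
    · rw [hE'ne i h]; exact hint i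
  · apply Finset.sum_lt_sum
    · intro i _
      by_cases h : i = m
      · subst h
        rw [hE'm]
        have h1 : (0:ℝ) < 1 + θ m * E m / α m := by
          have := div_nonneg (mul_nonneg (hθ m).le (hE0 m)) (hα0 m)
          linarith
        have h2 : 1 + θ m * E m / α m < 1 + θ m * (E m + ε) / α m := by
          have hnum : θ m * E m < θ m * (E m + ε) := by nlinarith [hθ m]
          have := (div_lt_div_iff_of_pos_right hαM).mpr hnum
          linarith
        exact le_of_lt (mul_lt_mul_of_pos_left
          (Real.logb_lt_logb (by norm_num) h1 h2) hαM)
      · rw [hE'ne i h]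
    · refine ⟨m, Finset.mem_univ m, ?_⟩
      rw [hE'm]
      have h1 : (0:ℝ) < 1 + θ m * E m / α m := by
        have := div_nonneg (mul_nonneg (hθ m).le (hE0 m)) (hα0 m)
        linarith
      have h2 : 1 + θ m * E m / α m < 1 + θ m * (E m + ε) / α m := by
        have hnum : θ m * E m < θ m * (E m + ε) := by nlinarith [hθ m]
        have := (div_lt_div_iff_of_pos_right hαM).mpr hnum
        linarith
      exact mul_lt_mul_of_pos_left (Real.logb_lt_logb (by norm_num) h1 h2) hαM
end

section
/- Fix ζ > 0, let z* > 1 be the unique solution of z·ln z − z − ζ + 1 = 0, and set α₀ = ζ/(ζ + z* − 1). Then α₀ ∈ (0,1), and α₀ is the unique global maximizer of g_ζ(α) = α · log₂(1 + ζ(1−α)/α) over α ∈ (0,1); that is, g_ζ(α) < g_ζ(α₀) for every α ∈ (0,1) with α ≠ α₀. -/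
/-- If `z* > 1` solves `z ln z − z − ζ + 1 = 0` and `α₀ = ζ/(ζ + z* − 1)`, then
`α₀ ∈ (0,1)` and `α₀` is the unique global maximizer of
`g_ζ(α) = α log₂(1 + ζ(1−α)/α)` on `(0,1)`. -/
theorem myopic_unconstrained_maximizer (ζ : ℝ) (hζ : 0 < ζ)
    (z : ℝ) (hz : 1 < z) (hzeq : z * Real.log z - z - ζ + 1 = 0)
    (α₀ : ℝ) (hα₀ : α₀ = ζ / (ζ + z - 1)) :
    α₀ ∈ Set.Ioo (0 : ℝ) 1 ∧
      ∀ α ∈ Set.Ioo (0 : ℝ) 1, α ≠ α₀ →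
        α * Real.logb 2 (1 + ζ * (1 - α) / α)
          < α₀ * Real.logb 2 (1 + ζ * (1 - α₀) / α₀) := by
  have hd : 0 < ζ + z - 1 := by linarith
  have hα₀pos : 0 < α₀ := hα₀ ▸ div_pos hζ hd
  have hα₀lt : α₀ < 1 := by rw [hα₀, div_lt_one hd]; linarith
  refine ⟨⟨hα₀pos, hα₀lt⟩, ?_⟩
  set φ : ℝ → ℝ := fun u => Real.log u / (ζ + u - 1) with hφdef
  set N : ℝ → ℝ := fun u => u⁻¹ * (ζ + u - 1) - Real.log u with hNdef
  -- derivative of N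
  have hN : ∀ u : ℝ, 0 < u → HasDerivAt N (-(ζ + u - 1) / u ^ 2) u := by
    intro u hu
    have h1 : HasDerivAt (fun x : ℝ => ζ + x - 1) 1 u := by
      simpa using ((hasDerivAt_id u).const_add ζ).sub_const 1
    have h2 : HasDerivAt (fun x : ℝ => x⁻¹) (-(u ^ 2)⁻¹) u := hasDerivAt_inv (ne_of_gt hu)
    have h3 : HasDerivAt N _ u := (h2.mul h1).sub (Real.hasDerivAt_log (ne_of_gt hu))
    convert h3 using 1
    field_simp
    ring
  -- N strictly decreasing on [1, ∞)
  have hNanti : StrictAntiOn N (Set.Ici (1 : ℝ)) := by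
    apply strictAntiOn_of_deriv_neg (convex_Ici 1)
    · intro x hx
      exact (hN x (lt_of_lt_of_le one_pos hx)).continuousAt.continuousWithinAt
    · intro x hx
      rw [interior_Ici] at hx
      have hx1 : (1 : ℝ) < x := hx
      rw [(hN x (by linarith)).deriv]
      apply div_neg_of_neg_of_pos
      · linarith
      · positivity
  have hzne : z ≠ 0 := by linarith
  have hNz : N z = 0 := by
    simp only [hNdef]
    field_simp
    linarith [hzeq]
  -- derivative of φ on [1, ∞)
  have hφ : ∀ u : ℝ, 1 ≤ u → HasDerivAt φ (N u / (ζ + u - 1) ^ 2) u := by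
    intro u hu
    have hu0 : (0 : ℝ) < u := by linarith
    have hden : ζ + u - 1 ≠ 0 := by nlinarith
    have h1 : HasDerivAt (fun x : ℝ => ζ + x - 1) 1 u := by
      simpa using ((hasDerivAt_id u).const_add ζ).sub_const 1
    have h3 : HasDerivAt φ _ u := (Real.hasDerivAt_log (ne_of_gt hu0)).div h1 hden
    convert h3 using 1
    simp only [hNdef]
    ring
  -- φ strictly increasing on [1, z]
  have hφmono : StrictMonoOn φ (Set.Icc 1 z) := by
    apply strictMonoOn_of_deriv_pos (convex_Icc 1 z)
    · intro x hx
      exact (hφ x hx.1).continuousAt.continuousWithinAt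
    · intro x hx
      rw [interior_Icc] at hx
      rw [(hφ x hx.1.le).deriv]
      apply div_pos
      · have := hNanti (Set.mem_Ici.2 hx.1.le) (Set.mem_Ici.2 (by linarith [hx.2] : (1:ℝ) ≤ z)) hx.2
        linarith [hNz ▸ this]
      · have : (0:ℝ) < ζ + x - 1 := by linarith [hx.1]
        positivity
  -- φ strictly decreasing on [z, ∞)
  have hφanti : StrictAntiOn φ (Set.Ici z) := by
    apply strictAntiOn_of_deriv_neg (convex_Ici z)
    · intro x hx
      exact (hφ x (by linarith [Set.mem_Ici.1 hx])).continuousAt.continuousWithinAt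
    · intro x hx
      rw [interior_Ici] at hx
      have hzx : z < x := hx
      rw [(hφ x (by linarith)).deriv]
      apply div_neg_of_neg_of_pos
      · have := hNanti (Set.mem_Ici.2 hz.le) (Set.mem_Ici.2 (by linarith : (1:ℝ) ≤ x)) hzx
        rw [hNz] at this
        linarith
      · have : (0:ℝ) < ζ + x - 1 := by linarith
        positivity
  -- key: φ u < φ z for u > 1, u ≠ z
  have key : ∀ u : ℝ, 1 < u → u ≠ z → φ u < φ z := by
    intro u hu hune
    rcases lt_or_gt_of_ne hune with h | h
    · exact hφmono (Set.mem_Icc.2 ⟨hu.le, h.le⟩) (Set.mem_Icc.2 ⟨hz.le, le_refl z⟩) h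
    · exact hφanti (Set.mem_Ici.2 (le_refl z)) (Set.mem_Ici.2 h.le) h
  -- final assembly
  intro α hα hne
  obtain ⟨hα0, hα1⟩ := hα
  have hαne : α ≠ 0 := ne_of_gt hα0
  set u : ℝ := 1 + ζ * (1 - α) / α with hudef
  have hu1 : 1 < u := by
    have : 0 < ζ * (1 - α) / α := by
      apply div_pos (mul_pos hζ (by linarith)) hα0
    simp only [hudef]; linarith
  have hαu : α * (ζ + u - 1) = ζ := by
    simp only [hudef]
    field_simp
    ring
  have hune : u ≠ z := by
    intro h
    apply hne
    rw [h] at hαu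
    rw [hα₀, eq_div_iff (ne_of_gt hd)]
    linarith [hαu]
  have hu0 : 1 + ζ * (1 - α₀) / α₀ = z := by
    rw [hα₀]
    field_simp
    ring
  have hlog2 : 0 < Real.log 2 := Real.log_pos one_lt_two
  have hrepr : ∀ β v : ℝ, 0 < β → β * (ζ + v - 1) = ζ →
      β * Real.logb 2 v = (ζ / Real.log 2) * φ v := by
    intro β v hβ hβv
    have hden : ζ + v - 1 ≠ 0 := by
      intro h
      rw [h, mul_zero] at hβv
      exact (ne_of_gt hζ) hβv.symm
    have hβeq : β = ζ / (ζ + v - 1) := by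
      field_simp
      linarith [hβv]
    simp only [Real.logb, hφdef]
    rw [hβeq]
    ring
  have hα₀u : α₀ * (ζ + z - 1) = ζ := by
    rw [hα₀]; field_simp
  rw [hu0, hrepr α u hα0 hαu, hrepr α₀ z hα₀pos hα₀u]
  exact mul_lt_mul_of_pos_left (key u hu1 hune) (div_pos hζ hlog2)
end

section
/- Fix ζ > 0 and Ψ ∈ (0,1). Let z* > 1 be the unique solution of z·ln z − z − ζ + 1 = 0 and set α₀ = ζ/(ζ + z* − 1). Then α* = max{α₀, Ψ} maximizes g_ζ(α) = α · log₂(1 + ζ(1−α)/α) over the constrained interval {α : Ψ ≤ α < 1}; that is, g_ζ(α) ≤ g_ζ(α*) for every α with Ψ ≤ α < 1. -/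
private lemma log_le_aux {x y : ℝ} (hx : 0 < x) (hy : 0 < y) :
    Real.log x ≤ Real.log y + (x - y) / y := by
  have h := Real.log_le_sub_one_of_pos (show (0:ℝ) < x / y by positivity)
  rw [Real.log_div hx.ne' hy.ne'] at h
  have : x / y - 1 = (x - y) / y := by field_simp
  linarith [this ▸ h]

/-- Unconstrained bound: f(α) ≤ ζ/z for all α ∈ (0,1). -/
private lemma lemA (ζ z α : ℝ) (hζ : 0 < ζ) (hz : 1 < z)
    (hzeq : z * Real.log z = z + ζ - 1) (hα : 0 < α) (hα1 : α < 1) :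
    α * Real.log (1 + ζ * (1 - α) / α) ≤ ζ / z := by
  set u := 1 + ζ * (1 - α) / α with hu
  have hz0 : (0:ℝ) < z := by linarith
  have hq : 0 < ζ * (1 - α) / α := by
    apply div_pos (mul_pos hζ (by linarith)) hα
  have hupos : 0 < u := by rw [hu]; linarith
  have hlog : Real.log u ≤ Real.log z + (u - z) / z := log_le_aux hupos hz0
  have key : α * u = ζ + (1 - ζ) * α := by
    rw [hu]; field_simp; ring
  have h2 : α * Real.log u ≤ α * (Real.log z + (u - z) / z) :=
    mul_le_mul_of_nonneg_left hlog hα.le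
  have h3 : α * (Real.log z + (u - z) / z) = ζ / z := by
    field_simp
    nlinarith [key, hzeq]
  linarith [h2, h3 ▸ h2]

/-- Monotonicity on the constrained side: if 0 < β ≤ α < 1 and u(β) ≤ z then f(α) ≤ f(β). -/
private lemma lemB (ζ z α β : ℝ) (hζ : 0 < ζ) (hz : 1 < z)
    (hzeq : z * Real.log z = z + ζ - 1) (hβ : 0 < β) (hβα : β ≤ α) (hα1 : α < 1)
    (hwz : 1 + ζ * (1 - β) / β ≤ z) :
    α * Real.log (1 + ζ * (1 - α) / α) ≤ β * Real.log (1 + ζ * (1 - β) / β) := by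
  set u := 1 + ζ * (1 - α) / α with hu
  set w := 1 + ζ * (1 - β) / β with hw
  have hα : 0 < α := lt_of_lt_of_le hβ hβα
  have hβ1 : β < 1 := lt_of_le_of_lt hβα hα1
  have hz0 : (0:ℝ) < z := by linarith
  have hupos : 0 < u := by
    have : 0 < ζ * (1 - α) / α := div_pos (mul_pos hζ (by linarith)) hα
    rw [hu]; linarith
  have hw1 : 1 < w := by
    have : 0 < ζ * (1 - β) / β := div_pos (mul_pos hζ (by linarith)) hβ
    rw [hw]; linarith
  have hwpos : 0 < w := by linarith
  have keyb : β * w = ζ + (1 - ζ) * β := by rw [hw]; field_simp; ring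
  have keya : α * u = ζ + (1 - ζ) * α := by rw [hu]; field_simp; ring
  -- N(w) ≥ 0 : log w ≤ ζ/(β w)
  have hN : Real.log w ≤ ζ / (β * w) := by
    have h1 : Real.log w ≤ Real.log z + (w - z) / z := log_le_aux hwpos hz0
    have h2 : Real.log z + (w - z) / z = (w + ζ - 1) / z := by
      field_simp
      nlinarith [hzeq]
    have h3 : (w + ζ - 1) / z ≤ (w + ζ - 1) / w := by
      apply div_le_div_of_nonneg_left (by linarith) hwpos hwz
    have h4 : (w + ζ - 1) / w = ζ / (β * w) := by
      rw [div_eq_div_iff hwpos.ne' (by positivity)]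
      nlinarith [keyb]
    linarith [h1, h2 ▸ h1, h4 ▸ h3]
  have hlog : Real.log u ≤ Real.log w + (u - w) / w := log_le_aux hupos hwpos
  have h2 : α * Real.log u ≤ α * Real.log w + α * ((u - w) / w) := by
    nlinarith [mul_le_mul_of_nonneg_left hlog hα.le]
  have heq : α * (u - w) = ζ * (β - α) / β := by
    rw [hu, hw]; field_simp; ring
  have h4 : α * ((u - w) / w) = ζ * (β - α) / (β * w) := by
    rw [← mul_div_assoc, heq, div_div]
  have h5 : (α - β) * Real.log w ≤ (α - β) * (ζ / (β * w)) :=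
    mul_le_mul_of_nonneg_left hN (by linarith)
  have h6 : ζ * (β - α) / (β * w) = -((α - β) * (ζ / (β * w))) := by ring
  nlinarith [h2, h4, h5, h6]

/-- Constrained myopic optimum: if `z* > 1` solves `z ln z − z − ζ + 1 = 0`,
`α₀ = ζ/(ζ + z* − 1)` and `Ψ ∈ (0,1)`, then `α* = max {α₀, Ψ}` maximizes
`g_ζ(α) = α log₂(1 + ζ(1−α)/α)` over `{α : Ψ ≤ α < 1}`. -/
theorem myopic_constrained_maximizer (ζ Ψ : ℝ) (hζ : 0 < ζ)
    (hΨ : Ψ ∈ Set.Ioo (0 : ℝ) 1)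
    (z : ℝ) (hz : 1 < z) (hzeq : z * Real.log z - z - ζ + 1 = 0)
    (α₀ : ℝ) (hα₀ : α₀ = ζ / (ζ + z - 1))
    (αstar : ℝ) (hαstar : αstar = max α₀ Ψ) :
    ∀ α : ℝ, Ψ ≤ α → α < 1 →
      α * Real.logb 2 (1 + ζ * (1 - α) / α)
        ≤ αstar * Real.logb 2 (1 + ζ * (1 - αstar) / αstar) := by
  intro α hΨα hα1
  obtain ⟨hΨ0, hΨ1⟩ := hΨ
  have hzeq' : z * Real.log z = z + ζ - 1 := by linarith
  have hlog2 : (0:ℝ) < Real.log 2 := Real.log_pos (by norm_num)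
  have hden : (0:ℝ) < ζ + z - 1 := by linarith
  have hα0pos : 0 < α₀ := by rw [hα₀]; positivity
  have hα01 : α₀ < 1 := by
    rw [hα₀, div_lt_one hden]; linarith
  have hα : 0 < α := lt_of_lt_of_le hΨ0 hΨα
  -- reduce logb to log
  simp only [Real.logb]
  rw [← mul_div_assoc, ← mul_div_assoc, div_le_div_iff_of_pos_right hlog2]
  rcases le_total α₀ Ψ with hc | hc
  · -- αstar = Ψ
    have hst : αstar = Ψ := by rw [hαstar, max_eq_right hc]
    subst hst
    apply lemB ζ z α αstar hζ hz hzeq' hΨ0 hΨα hα1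
    -- u(Ψ) ≤ z from α₀ ≤ Ψ
    have h1 : ζ ≤ αstar * (ζ + z - 1) := by
      rw [hα₀, div_le_iff₀ hden] at hc; linarith [hc]
    have h2 : ζ * (1 - αstar) / αstar ≤ z - 1 := by
      rw [div_le_iff₀ hΨ0]; nlinarith [h1]
    linarith
  · -- αstar = α₀
    have hst : αstar = α₀ := by rw [hαstar, max_eq_left hc]
    subst hst
    have hueq : 1 + ζ * (1 - αstar) / αstar = z := by
      rw [hα₀]; field_simp; ring
    rw [hueq]
    have hA := lemA ζ z α hζ hz hzeq' hα hα1
    have hlz : 0 < Real.log z := Real.log_pos hz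
    have : αstar * Real.log z = ζ / z := by
      rw [hα₀, div_mul_eq_mul_div, div_eq_div_iff hden.ne' (by linarith : (z:ℝ) ≠ 0)]
      nlinarith [hzeq']
    linarith [this ▸ hA]
end
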